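/- Let A be a finite-dimensional algebra over a field k which is Gorenstein, i.e., A has finite injective dimension as a left module over itself and finite injective dimension as a right module over itself. If every simple left A-module is torsionless, then A is self-injective. -/

import Mathlib

universe u

/-- The evaluation map `φ_M` from a left `R`-module `M` into its double `R`-dual
`M** = Hom_{Rᵒᵖ}(Hom_R(M, R), R)`. -/
def dualEval (R : Type u) [Ring R] (M : Type u) [AddCommGroup M] [Module R M] :
    M →ₗ[R] ((M →ₗ[R] R) →ₗ[Rᵐᵒᵖ] R) where
  toFun m :=
    { toFun := fun f => f m
      map_add' := fun f g => rfl
      map_smul' := fun a f => rfl }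
  map_add' m m' := by ext f; simp
  map_smul' a m := by ext f; simp

/-- `injDimLE R n M` says that the `R`-module `M` has injective dimension at most `n`:
for `n = 0` this means `M` is injective, and for `n + 1` it means that `M` embeds into
an injective module whose cokernel has injective dimension at most `n`. -/
def injDimLE (R : Type u) [Ring R] :
    (n : ℕ) → (M : Type u) → [AddCommGroup M] → [Module R M] → Prop
  | 0, M, _, _ => Module.Injective R M
  | n + 1, M, _, _ =>
      ∃ (I : ModuleCat.{u} R) (f : M →ₗ[R] I),
        Module.Injective R I ∧ Function.Injective f ∧
        injDimLE R n (I ⧸ LinearMap.range f)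


variable {A : Type u} [Ring A]

section Basic

/-- A subsingleton module is injective. -/
theorem injective_of_subsingleton (M : Type u) [AddCommGroup M] [Module A M] [Subsingleton M] :
    Module.Injective A M where
  out X Y _ _ _ _ f hf g := ⟨0, fun x => Subsingleton.elim _ _⟩

/-- A retract of an injective module is injective. -/
theorem injective_of_retract {I Q : Type u} [AddCommGroup I] [Module A I]
    [AddCommGroup Q] [Module A Q] (hI : Module.Injective A I)
    (p : I →ₗ[A] Q) (t : Q →ₗ[A] I) (hpt : ∀ q, p (t q) = q) :
    Module.Injective A Q where
  out X Y _ _ _ _ f hf g := by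
    obtain ⟨h, hh⟩ := hI.out f hf (t.comp g)
    exact ⟨p.comp h, fun x => by simp [hh x, hpt]⟩

/-- Product of injective modules is injective. -/
theorem injective_prod {I J : Type u} [AddCommGroup I] [Module A I]
    [AddCommGroup J] [Module A J] (hI : Module.Injective A I) (hJ : Module.Injective A J) :
    Module.Injective A (I × J) where
  out X Y _ _ _ _ f hf g := by
    obtain ⟨h₁, hh₁⟩ := hI.out f hf ((LinearMap.fst A I J).comp g)
    obtain ⟨h₂, hh₂⟩ := hJ.out f hf ((LinearMap.snd A I J).comp g)
    exact ⟨h₁.prod h₂, fun x => by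
      simp only [LinearMap.prod_apply, Function.prod, hh₁ x, hh₂ x]
      rfl⟩

/-- Every module embeds into an injective module. -/
theorem exists_embed_injective (M : Type u) [AddCommGroup M] [Module A M] :
    ∃ (I : ModuleCat.{u} A) (e : M →ₗ[A] I), Module.Injective A I ∧ Function.Injective e := by
  haveI : CategoryTheory.EnoughInjectives (ModuleCat.{u} A) := inferInstance
  let J := CategoryTheory.Injective.under (ModuleCat.of A M)
  let ι := CategoryTheory.Injective.ι (ModuleCat.of A M)
  haveI hJ : CategoryTheory.Injective J := inferInstance
  haveI : CategoryTheory.Injective (ModuleCat.of A J) :=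
    CategoryTheory.Injective.of_iso (CategoryTheory.Iso.refl _ : J ≅ ModuleCat.of A J) hJ
  refine ⟨J, ι.hom, Module.injective_module_of_injective_object A J, ?_⟩
  exact (ModuleCat.mono_iff_injective ι).mp inferInstance

end Basic


/-- `extV A n X M` says (morally) that `Ext^{n+1}_A(X, M) = 0`, expressed via
lifting properties along arbitrary embeddings of `M` into injective modules. -/
def extV (A : Type u) [Ring A] :
    (n : ℕ) → (X : Type u) → [AddCommGroup X] → [Module A X] →
    (M : Type u) → [AddCommGroup M] → [Module A M] → Prop
  | 0, X, _, _, M, _, _ => ∀ (I : Type u) [AddCommGroup I] [Module A I],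
      Module.Injective A I → ∀ (e : M →ₗ[A] I), Function.Injective e →
      ∀ φ : X →ₗ[A] (I ⧸ LinearMap.range e),
        ∃ ψ : X →ₗ[A] I, (LinearMap.range e).mkQ.comp ψ = φ
  | n+1, X, _, _, M, _, _ => ∀ (I : Type u) [AddCommGroup I] [Module A I],
      Module.Injective A I → ∀ (e : M →ₗ[A] I), Function.Injective e →
      extV A n X (I ⧸ LinearMap.range e)

/-- The "single-embedding" version of `extV`, relative to a submodule `N` of an
injective module `I` (thought of as the image of `M`). -/
def extVAt (A : Type u) [Ring A] :
    (n : ℕ) → (X : Type u) → [AddCommGroup X] → [Module A X] →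
    (I : Type u) → [AddCommGroup I] → [Module A I] → (N : Submodule A I) → Prop
  | 0, X, _, _, I, _, _, N =>
      ∀ φ : X →ₗ[A] (I ⧸ N), ∃ ψ : X →ₗ[A] I, N.mkQ.comp ψ = φ
  | n+1, X, _, _, I, _, _, N => extV A n X (I ⧸ N)

variable {A : Type u} [Ring A]

theorem extV_iff (n : ℕ) (X : Type u) [AddCommGroup X] [Module A X]
    (M : Type u) [AddCommGroup M] [Module A M] :
    extV A n X M ↔ ∀ (I : Type u) [AddCommGroup I] [Module A I],
      Module.Injective A I → ∀ (e : M →ₗ[A] I), Function.Injective e →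
      extVAt A n X I (LinearMap.range e) := by
  cases n <;> exact Iff.rfl

theorem extV_congr : ∀ (n : ℕ) ⦃X X' M M' : Type u⦄
    [AddCommGroup X] [Module A X] [AddCommGroup X'] [Module A X']
    [AddCommGroup M] [Module A M] [AddCommGroup M'] [Module A M']
    (_ : X ≃ₗ[A] X') (_ : M ≃ₗ[A] M'), extV A n X M → extV A n X' M'
  | 0 => by
    intro X X' M M' _ _ _ _ _ _ _ _ e₁ e₂ h I _ _ hI e he φ
    have he' : Function.Injective (e.comp e₂.toLinearMap) := he.comp e₂.injective
    have hrange : LinearMap.range (e.comp e₂.toLinearMap) = LinearMap.range e := by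
      rw [LinearMap.range_comp, LinearEquiv.range, Submodule.map_top]
    let q := Submodule.quotEquivOfEq _ _ hrange
    obtain ⟨ψ, hψ⟩ := h I hI (e.comp e₂.toLinearMap) he'
      (q.symm.toLinearMap ∘ₗ φ ∘ₗ e₁.toLinearMap)
    refine ⟨ψ ∘ₗ e₁.symm.toLinearMap, ?_⟩
    ext x
    have h2 := LinearMap.congr_fun hψ (e₁.symm x)
    simp only [LinearMap.comp_apply, LinearEquiv.coe_coe, LinearEquiv.apply_symm_apply] at h2 ⊢
    have h3 : ∀ z : I, ((LinearMap.range e).mkQ z : I ⧸ LinearMap.range e) =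
        q ((LinearMap.range (e.comp e₂.toLinearMap)).mkQ z) := by
      intro z
      simp [q, Submodule.quotEquivOfEq_mk]
    rw [h3, h2]
    simp [q]
  | n+1 => by
    intro X X' M M' _ _ _ _ _ _ _ _ e₁ e₂ h I _ _ hI e he
    have he' : Function.Injective (e.comp e₂.toLinearMap) := he.comp e₂.injective
    have hrange : LinearMap.range (e.comp e₂.toLinearMap) = LinearMap.range e := by
      rw [LinearMap.range_comp, LinearEquiv.range, Submodule.map_top]
    exact extV_congr n e₁ (Submodule.quotEquivOfEq _ _ hrange) (h I hI _ he')

theorem extV_of_subsingleton_left : ∀ (n : ℕ) (X M : Type u)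
    [AddCommGroup X] [Module A X] [AddCommGroup M] [Module A M]
    [Subsingleton X], extV A n X M
  | 0 => by
    intro X M _ _ _ _ _ I _ _ hI e he φ
    refine ⟨0, ?_⟩
    ext x
    rw [Subsingleton.elim x 0]
    simp
  | n+1 => by
    intro X M _ _ _ _ _ I _ _ hI e he
    exact extV_of_subsingleton_left n X _

theorem extV_of_injective : ∀ (n : ℕ) (X M : Type u)
    [AddCommGroup X] [Module A X] [AddCommGroup M] [Module A M],
    Module.Injective A M → extV A n X M
  | 0 => by
    intro X M _ _ _ _ hM I _ _ hI e he φ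
    obtain ⟨r, hr⟩ := hM.out e he LinearMap.id
    have hkill : LinearMap.range e ≤ LinearMap.ker (LinearMap.id - e.comp r) := by
      rintro x ⟨m, rfl⟩
      simp [hr m]
    let t := (LinearMap.range e).liftQ (LinearMap.id - e.comp r) hkill
    have key : ∀ q : I ⧸ LinearMap.range e, (LinearMap.range e).mkQ (t q) = q := by
      intro q
      obtain ⟨i, rfl⟩ := (LinearMap.range e).mkQ_surjective q
      simp only [t, Submodule.mkQ_apply, Submodule.liftQ_apply, LinearMap.sub_apply,
        LinearMap.id_apply, LinearMap.comp_apply, map_sub]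
      rw [(Submodule.Quotient.mk_eq_zero _).2 (LinearMap.mem_range_self e (r i))]
      simp
    exact ⟨t ∘ₗ φ, by ext x; simpa using key (φ x)⟩
  | n+1 => by
    intro X M _ _ _ _ hM I _ _ hI e he
    obtain ⟨r, hr⟩ := hM.out e he LinearMap.id
    have hkill : LinearMap.range e ≤ LinearMap.ker (LinearMap.id - e.comp r) := by
      rintro x ⟨m, rfl⟩
      simp [hr m]
    let t := (LinearMap.range e).liftQ (LinearMap.id - e.comp r) hkill
    have key : ∀ q : I ⧸ LinearMap.range e, (LinearMap.range e).mkQ (t q) = q := by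
      intro q
      obtain ⟨i, rfl⟩ := (LinearMap.range e).mkQ_surjective q
      simp only [t, Submodule.mkQ_apply, Submodule.liftQ_apply, LinearMap.sub_apply,
        LinearMap.id_apply, LinearMap.comp_apply, map_sub]
      rw [(Submodule.Quotient.mk_eq_zero _).2 (LinearMap.mem_range_self e (r i))]
      simp
    exact extV_of_injective n X _ (injective_of_retract hI (LinearMap.range e).mkQ t key)

theorem extV_self_left : ∀ (n : ℕ) (M : Type u) [AddCommGroup M] [Module A M],
    extV A n A M
  | 0 => by
    intro M _ _ I _ _ hI e he φ
    obtain ⟨y, hy⟩ := (LinearMap.range e).mkQ_surjective (φ 1)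
    refine ⟨LinearMap.toSpanSingleton A I y, ?_⟩
    ext
    simpa [LinearMap.toSpanSingleton_apply] using hy
  | n+1 => by
    intro M _ _ I _ _ hI e he
    exact extV_self_left n _

/-- Contravariant dimension shift: if `0 → S → X → Q → 0` is exact, `Ext^{n+1}(X,M)=0`
and `Ext^{n+2}(Q,M)=0`, then `Ext^{n+1}(S,M)=0`. -/
theorem extV_of_sub : ∀ (n : ℕ) ⦃S X M : Type u⦄
    [AddCommGroup S] [Module A S] [AddCommGroup X] [Module A X]
    [AddCommGroup M] [Module A M]
    (ι : S →ₗ[A] X) (_ : Function.Injective ι),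
    extV A n X M → extV A (n+1) (X ⧸ LinearMap.range ι) M → extV A n S M
  | 0 => by
    intro S X M _ _ _ _ _ _ ι hι hX hQ I _ _ hI e he φ
    obtain ⟨I₂, e₂, hI₂, he₂⟩ := exists_embed_injective (A := A) (I ⧸ LinearMap.range e)
    obtain ⟨Φ, hΦ⟩ := hI₂.out ι hι (e₂ ∘ₗ φ)
    have hkill : LinearMap.range ι ≤
        LinearMap.ker ((LinearMap.range e₂).mkQ ∘ₗ Φ) := by
      rintro x ⟨s, rfl⟩
      simp only [LinearMap.mem_ker, LinearMap.comp_apply, hΦ s]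
      exact (Submodule.Quotient.mk_eq_zero _).2 (LinearMap.mem_range_self e₂ (φ s))
    set χ := (LinearMap.range ι).liftQ ((LinearMap.range e₂).mkQ ∘ₗ Φ) hkill with hχ
    obtain ⟨Ψ, hΨ⟩ := (hQ I hI e he) I₂ hI₂ e₂ he₂ χ
    set Θ := Φ - Ψ ∘ₗ (LinearMap.range ι).mkQ with hΘdef
    have hΘ : ∀ x, Θ x ∈ LinearMap.range e₂ := by
      intro x
      have h1 : (LinearMap.range e₂).mkQ (Ψ ((LinearMap.range ι).mkQ x)) =
          χ ((LinearMap.range ι).mkQ x) := LinearMap.congr_fun hΨ _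
      have h2 : χ ((LinearMap.range ι).mkQ x) = (LinearMap.range e₂).mkQ (Φ x) := by
        simp [hχ]
      have h3 : (LinearMap.range e₂).mkQ (Θ x) = 0 := by
        rw [hΘdef]
        simp only [LinearMap.sub_apply, LinearMap.comp_apply, map_sub, h1, h2, sub_self]
      rwa [Submodule.mkQ_apply, Submodule.Quotient.mk_eq_zero] at h3
    set eqv := LinearEquiv.ofInjective e₂ he₂ with heqv
    set Φ' := eqv.symm.toLinearMap ∘ₗ (Θ.codRestrict (LinearMap.range e₂) hΘ) with hΦ'def
    have hΦ'e₂ : ∀ x, e₂ (Φ' x) = Θ x := by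
      intro x
      have hcoe : ∀ y, (eqv y : I₂) = e₂ y := fun y => rfl
      simp only [hΦ'def, LinearMap.comp_apply, LinearEquiv.coe_coe]
      rw [← hcoe, eqv.apply_symm_apply]
      rfl
    have hΦ'ι : ∀ s, Φ' (ι s) = φ s := by
      intro s
      apply he₂
      rw [hΦ'e₂]
      simp only [hΘdef, LinearMap.sub_apply, LinearMap.comp_apply, Submodule.mkQ_apply, hΦ s]
      rw [(Submodule.Quotient.mk_eq_zero _).2 (LinearMap.mem_range_self ι s)]
      simp
    obtain ⟨ψX, hψX⟩ := hX I hI e he Φ'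
    refine ⟨ψX ∘ₗ ι, ?_⟩
    ext s
    have := LinearMap.congr_fun hψX (ι s)
    simp only [LinearMap.comp_apply] at this ⊢
    rw [this, hΦ'ι]
  | n+1 => by
    intro S X M _ _ _ _ _ _ ι hι hX hQ I _ _ hI e he
    exact extV_of_sub n ι hι (hX I hI e he) (hQ I hI e he)

/-- Covariant two-of-three: if `0 → S → X → Q → 0` is exact, `Ext^{n+1}(S,M)=0`
and `Ext^{n+1}(Q,M)=0`, then `Ext^{n+1}(X,M)=0`. -/
theorem extV_of_ses : ∀ (n : ℕ) ⦃S X M : Type u⦄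
    [AddCommGroup S] [Module A S] [AddCommGroup X] [Module A X]
    [AddCommGroup M] [Module A M]
    (ι : S →ₗ[A] X) (_ : Function.Injective ι),
    extV A n S M → extV A n (X ⧸ LinearMap.range ι) M → extV A n X M
  | 0 => by
    intro S X M _ _ _ _ _ _ ι hι hS hQ I _ _ hI e he φ
    obtain ⟨ψS, hψS⟩ := hS I hI e he (φ ∘ₗ ι)
    obtain ⟨Θ, hΘ⟩ := hI.out ι hι ψS
    have hkill : LinearMap.range ι ≤
        LinearMap.ker (φ - (LinearMap.range e).mkQ ∘ₗ Θ) := by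
      rintro x ⟨s, rfl⟩
      have := LinearMap.congr_fun hψS s
      simp only [LinearMap.mem_ker, LinearMap.sub_apply, LinearMap.comp_apply, hΘ s] at *
      rw [this, sub_self]
    set χ := (LinearMap.range ι).liftQ _ hkill with hχ
    obtain ⟨Ψ, hΨ⟩ := hQ I hI e he χ
    refine ⟨Θ + Ψ ∘ₗ (LinearMap.range ι).mkQ, ?_⟩
    ext x
    have h1 : (LinearMap.range e).mkQ (Ψ ((LinearMap.range ι).mkQ x)) =
        χ ((LinearMap.range ι).mkQ x) := LinearMap.congr_fun hΨ _
    have h2 : χ ((LinearMap.range ι).mkQ x) = φ x - (LinearMap.range e).mkQ (Θ x) := by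
      simp [hχ]
    simp only [LinearMap.comp_apply, LinearMap.add_apply, map_add, h1, h2]
    abel
  | n+1 => by
    intro S X M _ _ _ _ _ _ ι hι hS hQ I _ _ hI e he
    exact extV_of_ses n ι hι (hS I hI e he) (hQ I hI e he)

theorem extVAt_zero_iff {X I : Type u} [AddCommGroup X] [Module A X]
    [AddCommGroup I] [Module A I] (N : Submodule A I) :
    extVAt A 0 X I N ↔ ∀ φ : X →ₗ[A] (I ⧸ N), ∃ ψ : X →ₗ[A] I, N.mkQ.comp ψ = φ := Iff.rfl

theorem extVAt_succ_iff (n : ℕ) {X I : Type u} [AddCommGroup X] [Module A X]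
    [AddCommGroup I] [Module A I] (N : Submodule A I) :
    extVAt A (n+1) X I N ↔ extV A n X (I ⧸ N) := Iff.rfl

/-- A short exact sequence admitting a retraction gives a product decomposition. -/
noncomputable def splitEquiv {B W C : Type u} [AddCommGroup B] [Module A B]
    [AddCommGroup W] [Module A W] [AddCommGroup C] [Module A C]
    (j : B →ₗ[A] W) (p : W →ₗ[A] C) (hj : Function.Injective j)
    (hp : Function.Surjective p) (hker : LinearMap.ker p = LinearMap.range j)
    (r : W →ₗ[A] B) (hr : ∀ b, r (j b) = b) : W ≃ₗ[A] B × C := by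
  refine LinearEquiv.ofBijective (r.prod p) ⟨?_, ?_⟩
  · intro w w' hww'
    have h1 : r w = r w' := congrArg Prod.fst hww'
    have h2 : p w = p w' := congrArg Prod.snd hww'
    have : w - w' ∈ LinearMap.ker p := by simp [LinearMap.mem_ker, map_sub, h2]
    rw [hker] at this
    obtain ⟨b, hb⟩ := this
    have hb0 : b = 0 := by
      have h3 : r (w - w') = b := by rw [← hb, hr]
      rw [map_sub, h1, sub_self] at h3
      exact h3.symm
    have h4 : w - w' = 0 := by rw [← hb, hb0, map_zero]
    exact sub_eq_zero.mp h4
  · rintro ⟨b, c⟩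
    obtain ⟨w₀, hw₀⟩ := hp c
    refine ⟨w₀ + j (b - r w₀), ?_⟩
    have hpj : ∀ b', p (j b') = 0 := by
      intro b'
      have : j b' ∈ LinearMap.ker p := hker ▸ LinearMap.mem_range_self j b'
      exact LinearMap.mem_ker.mp this
    have e1 : r (w₀ + j (b - r w₀)) = b := by rw [map_add, hr]; abel
    have e2 : p (w₀ + j (b - r w₀)) = c := by rw [map_add, hpj, add_zero, hw₀]
    simp only [LinearMap.prod_apply, Function.prod]
    rw [e1, e2]

/-- Quotient of a product by a product of submodules. -/
noncomputable def quotProdEquiv {I J : Type u} [AddCommGroup I] [Module A I]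
    [AddCommGroup J] [Module A J] (p : Submodule A I) (q : Submodule A J) :
    ((I × J) ⧸ p.prod q) ≃ₗ[A] (I ⧸ p) × (J ⧸ q) := by
  refine LinearEquiv.ofBijective
    ((p.prod q).liftQ ((p.mkQ.comp (LinearMap.fst A I J)).prod
      (q.mkQ.comp (LinearMap.snd A I J))) ?_) ⟨?_, ?_⟩
  · rintro ⟨i, j⟩ hij
    rw [Submodule.mem_prod] at hij
    obtain ⟨hi, hj⟩ := hij
    simp only [LinearMap.mem_ker, LinearMap.prod_apply, Function.prod, LinearMap.comp_apply,
      Submodule.mkQ_apply, LinearMap.fst_apply, LinearMap.snd_apply, Prod.mk_eq_zero]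
    exact ⟨(Submodule.Quotient.mk_eq_zero _).2 hi, (Submodule.Quotient.mk_eq_zero _).2 hj⟩
  · intro x y hxy
    obtain ⟨⟨i, j⟩, rfl⟩ := (p.prod q).mkQ_surjective x
    obtain ⟨⟨i', j'⟩, rfl⟩ := (p.prod q).mkQ_surjective y
    simp only [Submodule.mkQ_apply, Submodule.liftQ_apply, LinearMap.prod_apply, Function.prod,
      LinearMap.comp_apply, LinearMap.fst_apply, LinearMap.snd_apply, Prod.mk.injEq] at hxy
    obtain ⟨h1, h2⟩ := hxy
    rw [Submodule.Quotient.eq] at h1 h2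
    rw [Submodule.mkQ_apply, Submodule.mkQ_apply, Submodule.Quotient.eq]
    exact ⟨h1, h2⟩
  · rintro ⟨a, b⟩
    obtain ⟨i, rfl⟩ := p.mkQ_surjective a
    obtain ⟨j, rfl⟩ := q.mkQ_surjective b
    exact ⟨(p.prod q).mkQ (i, j), rfl⟩

/-- A convenient embedding of `B × D` into an injective module, whose
cosyzygy is identified with that of `B`. -/
theorem exists_nice_prod_embed (B D : Type u)
    [AddCommGroup B] [Module A B] [AddCommGroup D] [Module A D] :
    ∃ (I_B : ModuleCat.{u} A) (e_B : B →ₗ[A] I_B) (E : B × D →ₗ[A] ↥I_B × D)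
      (ρ : ((↥I_B × D) ⧸ LinearMap.range E) ≃ₗ[A] (↥I_B ⧸ LinearMap.range e_B)),
      Module.Injective A ↥I_B ∧ Function.Injective e_B ∧ Function.Injective E ∧
      (∀ z : ↥I_B × D, ρ ((LinearMap.range E).mkQ z) = (LinearMap.range e_B).mkQ z.1) := by
  obtain ⟨I_B, e_B, hI_B, he_B⟩ := exists_embed_injective (A := A) B
  set E := e_B.prodMap (LinearMap.id : D →ₗ[A] D) with hE_def
  have hE : Function.Injective E := by
    rw [hE_def, LinearMap.coe_prodMap]
    exact he_B.prodMap (fun a b h => h)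
  have hpbarle : LinearMap.range E ≤
      (LinearMap.range e_B).comap (LinearMap.fst A ↥I_B D) := by
    rintro x ⟨⟨b, d⟩, rfl⟩
    exact ⟨b, rfl⟩
  set pbar := Submodule.mapQ (LinearMap.range E) (LinearMap.range e_B)
    (LinearMap.fst A ↥I_B D) hpbarle with hpbardef
  have hpbarbij : Function.Bijective pbar := by
    constructor
    · intro x y hxy
      obtain ⟨⟨i, dd⟩, rfl⟩ := (LinearMap.range E).mkQ_surjective x
      obtain ⟨⟨i', dd'⟩, rfl⟩ := (LinearMap.range E).mkQ_surjective y
      simp only [hpbardef, Submodule.mkQ_apply, Submodule.mapQ_apply, LinearMap.fst_apply] at hxy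
      rw [Submodule.Quotient.eq] at hxy
      rw [Submodule.mkQ_apply, Submodule.mkQ_apply, Submodule.Quotient.eq]
      obtain ⟨b, hb⟩ := hxy
      refine ⟨(b, dd - dd'), ?_⟩
      show (e_B b, (dd - dd' : D)) = (i, dd) - (i', dd')
      rw [hb, Prod.mk_sub_mk]
    · intro y
      obtain ⟨i, rfl⟩ := (LinearMap.range e_B).mkQ_surjective y
      exact ⟨(LinearMap.range E).mkQ (i, 0), by simp [hpbardef, Submodule.mapQ_apply]⟩
  refine ⟨I_B, e_B, E, LinearEquiv.ofBijective pbar hpbarbij, hI_B, he_B, hE, ?_⟩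
  intro z
  simp [hpbardef, Submodule.mapQ_apply]

mutual

/-- Independence of the lifting condition from the chosen injective embedding. -/
theorem extV_indep : ∀ (n : ℕ) ⦃X M I₀ I : Type u⦄
    [AddCommGroup X] [Module A X] [AddCommGroup M] [Module A M]
    [AddCommGroup I₀] [Module A I₀] [AddCommGroup I] [Module A I]
    (_ : Module.Injective A I₀) (_ : Module.Injective A I)
    (f : M →ₗ[A] I₀) (_ : Function.Injective f)
    (e : M →ₗ[A] I) (_ : Function.Injective e),
    extVAt A n X I₀ (LinearMap.range f) → extVAt A n X I (LinearMap.range e)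
  | 0 => by
    intro X M I₀ I _ _ _ _ _ _ _ _ hI₀ hI f hf e he h φ
    obtain ⟨α, hα⟩ := hI₀.out e he f
    obtain ⟨β, hβ⟩ := hI.out f hf e
    have hᾱle : LinearMap.range e ≤ (LinearMap.range f).comap α := by
      rintro x ⟨m, rfl⟩
      exact ⟨m, (hα m).symm⟩
    set ᾱ := Submodule.mapQ (LinearMap.range e) (LinearMap.range f) α hᾱle with hᾱ
    obtain ⟨Ψ, hΨ⟩ := h (ᾱ ∘ₗ φ)
    have hγkill : LinearMap.range e ≤ LinearMap.ker (β ∘ₗ α - LinearMap.id) := by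
      rintro x ⟨m, rfl⟩
      simp [LinearMap.mem_ker, hα m, hβ m]
    set γ := (LinearMap.range e).liftQ (β ∘ₗ α - LinearMap.id) hγkill with hγ
    refine ⟨β ∘ₗ Ψ - γ ∘ₗ φ, ?_⟩
    ext x
    obtain ⟨i, hi⟩ := (LinearMap.range e).mkQ_surjective (φ x)
    have hΨx : (LinearMap.range f).mkQ (Ψ x) = (LinearMap.range f).mkQ (α i) := by
      have := LinearMap.congr_fun hΨ x
      simp only [LinearMap.comp_apply] at this
      rw [this, ← hi, hᾱ]
      simp [Submodule.mapQ_apply]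
    rw [Submodule.mkQ_apply, Submodule.mkQ_apply, Submodule.Quotient.eq] at hΨx
    obtain ⟨m, hm⟩ := hΨx
    have hΨx' : Ψ x = α i + f m := by rw [hm]; abel
    have hγφ : γ (φ x) = β (α i) - i := by
      rw [← hi]
      simp [hγ, Submodule.liftQ_apply]
    have hβΨ : β (Ψ x) = β (α i) + e m := by rw [hΨx', map_add, hβ m]
    simp only [LinearMap.comp_apply, LinearMap.sub_apply, map_sub, hβΨ, hγφ]
    rw [map_add]
    have h0 : (LinearMap.range e).mkQ (e m) = 0 :=
      (Submodule.Quotient.mk_eq_zero _).2 (LinearMap.mem_range_self e m)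
    rw [h0, ← hi]
    simp only [Submodule.mkQ_apply, map_sub]
    abel
  | n+1 => by
    intro X M I₀ I _ _ _ _ _ _ _ _ hI₀ hI f hf e he h
    -- Schanuel: (I₀ ⧸ range f) × I ≃ (I ⧸ range e) × I₀
    set d := f.prod e with hd
    have hdinj : Function.Injective d := fun m m' hmm' => hf (congrArg Prod.fst hmm')
    set j₁ := (LinearMap.range d).mkQ ∘ₗ LinearMap.inr A I₀ I with hj₁def
    have hj₁ : Function.Injective j₁ := by
      rw [← LinearMap.ker_eq_bot]
      rw [LinearMap.ker_eq_bot']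
      intro i hi
      simp only [hj₁def, LinearMap.comp_apply, LinearMap.inr_apply, Submodule.mkQ_apply] at hi
      rw [Submodule.Quotient.mk_eq_zero] at hi
      obtain ⟨m, hm⟩ := hi
      have h1 : f m = 0 := congrArg Prod.fst hm
      have h2 : e m = i := congrArg Prod.snd hm
      rw [← h2, show m = 0 from hf (by rw [h1, map_zero]), map_zero]
    have hp₁kill : LinearMap.range d ≤
        LinearMap.ker ((LinearMap.range f).mkQ ∘ₗ LinearMap.fst A I₀ I) := by
      rintro x ⟨m, rfl⟩
      simp only [LinearMap.mem_ker, LinearMap.comp_apply, hd, LinearMap.prod_apply, Pi.prod,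
        LinearMap.fst_apply, Submodule.mkQ_apply]
      exact (Submodule.Quotient.mk_eq_zero _).2 (LinearMap.mem_range_self f m)
    set p₁ := (LinearMap.range d).liftQ _ hp₁kill with hp₁def
    have hp₁surj : Function.Surjective p₁ := by
      intro y
      obtain ⟨i₀, rfl⟩ := (LinearMap.range f).mkQ_surjective y
      exact ⟨(LinearMap.range d).mkQ (i₀, 0), rfl⟩
    have hker₁ : LinearMap.ker p₁ = LinearMap.range j₁ := by
      apply le_antisymm
      · intro w hw
        obtain ⟨⟨i₀, i⟩, rfl⟩ := (LinearMap.range d).mkQ_surjective w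
        simp only [LinearMap.mem_ker, hp₁def, Submodule.mkQ_apply, Submodule.liftQ_apply,
          LinearMap.comp_apply, LinearMap.fst_apply] at hw
        rw [Submodule.Quotient.mk_eq_zero] at hw
        obtain ⟨m, hm⟩ := hw
        refine ⟨i - e m, ?_⟩
        simp only [hj₁def, LinearMap.comp_apply, LinearMap.inr_apply, Submodule.mkQ_apply]
        rw [Submodule.Quotient.eq]
        refine ⟨-m, ?_⟩
        show (f (-m), e (-m)) = (0, i - e m) - (i₀, i)
        rw [map_neg, map_neg, hm, Prod.mk_sub_mk]
        refine congrArg₂ Prod.mk ?_ ?_ <;> abel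
      · rintro w ⟨i, rfl⟩
        simp only [LinearMap.mem_ker, hj₁def, LinearMap.comp_apply, LinearMap.inr_apply,
          hp₁def, Submodule.mkQ_apply, Submodule.liftQ_apply, LinearMap.fst_apply]
        exact (Submodule.Quotient.mk_eq_zero _).2 (Submodule.zero_mem _)
    obtain ⟨r₁, hr₁⟩ := hI.out j₁ hj₁ LinearMap.id
    have equiv₁ := splitEquiv j₁ p₁ hj₁ hp₁surj hker₁ r₁ (fun b => hr₁ b)
    -- second decomposition
    set j₂ := (LinearMap.range d).mkQ ∘ₗ LinearMap.inl A I₀ I with hj₂def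
    have hj₂ : Function.Injective j₂ := by
      rw [← LinearMap.ker_eq_bot, LinearMap.ker_eq_bot']
      intro i₀ hi
      simp only [hj₂def, LinearMap.comp_apply, LinearMap.inl_apply, Submodule.mkQ_apply] at hi
      rw [Submodule.Quotient.mk_eq_zero] at hi
      obtain ⟨m, hm⟩ := hi
      have h1 : f m = i₀ := congrArg Prod.fst hm
      have h2 : e m = 0 := congrArg Prod.snd hm
      rw [← h1, show m = 0 from he (by rw [h2, map_zero]), map_zero]
    have hp₂kill : LinearMap.range d ≤
        LinearMap.ker ((LinearMap.range e).mkQ ∘ₗ LinearMap.snd A I₀ I) := by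
      rintro x ⟨m, rfl⟩
      simp only [LinearMap.mem_ker, LinearMap.comp_apply, hd, LinearMap.prod_apply, Pi.prod,
        LinearMap.snd_apply, Submodule.mkQ_apply]
      exact (Submodule.Quotient.mk_eq_zero _).2 (LinearMap.mem_range_self e m)
    set p₂ := (LinearMap.range d).liftQ _ hp₂kill with hp₂def
    have hp₂surj : Function.Surjective p₂ := by
      intro y
      obtain ⟨i, rfl⟩ := (LinearMap.range e).mkQ_surjective y
      exact ⟨(LinearMap.range d).mkQ (0, i), rfl⟩
    have hker₂ : LinearMap.ker p₂ = LinearMap.range j₂ := by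
      apply le_antisymm
      · intro w hw
        obtain ⟨⟨i₀, i⟩, rfl⟩ := (LinearMap.range d).mkQ_surjective w
        simp only [LinearMap.mem_ker, hp₂def, Submodule.mkQ_apply, Submodule.liftQ_apply,
          LinearMap.comp_apply, LinearMap.snd_apply] at hw
        rw [Submodule.Quotient.mk_eq_zero] at hw
        obtain ⟨m, hm⟩ := hw
        refine ⟨i₀ - f m, ?_⟩
        simp only [hj₂def, LinearMap.comp_apply, LinearMap.inl_apply, Submodule.mkQ_apply]
        rw [Submodule.Quotient.eq]
        refine ⟨-m, ?_⟩
        show (f (-m), e (-m)) = (i₀ - f m, 0) - (i₀, i)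
        rw [map_neg, map_neg, hm, Prod.mk_sub_mk]
        refine congrArg₂ Prod.mk ?_ ?_ <;> abel
      · rintro w ⟨i₀, rfl⟩
        simp only [LinearMap.mem_ker, hj₂def, LinearMap.comp_apply, LinearMap.inl_apply,
          hp₂def, Submodule.mkQ_apply, Submodule.liftQ_apply, LinearMap.snd_apply]
        exact (Submodule.Quotient.mk_eq_zero _).2 (Submodule.zero_mem _)
    obtain ⟨r₂, hr₂⟩ := hI₀.out j₂ hj₂ LinearMap.id
    have equiv₂ := splitEquiv j₂ p₂ hj₂ hp₂surj hker₂ r₂ (fun b => hr₂ b)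
    -- assemble
    have h1 : extV A n X ((I₀ ⧸ LinearMap.range f) × I) := extV_prodInj n h hI
    have etotal : ((I₀ ⧸ LinearMap.range f) × I) ≃ₗ[A] ((I ⧸ LinearMap.range e) × I₀) :=
      (((LinearEquiv.prodComm A _ _).trans equiv₁.symm).trans equiv₂).trans
        (LinearEquiv.prodComm A _ _)
    have h2 : extV A n X ((I ⧸ LinearMap.range e) × I₀) :=
      extV_congr n (LinearEquiv.refl A X) etotal h1
    exact extV_factor n h2
  termination_by n => 2 * n

/-- `Ext^{n+1}(X, B) = 0` and `D` injective imply `Ext^{n+1}(X, B × D) = 0`. -/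
theorem extV_prodInj : ∀ (n : ℕ) ⦃X B D : Type u⦄
    [AddCommGroup X] [Module A X] [AddCommGroup B] [Module A B]
    [AddCommGroup D] [Module A D],
    extV A n X B → Module.Injective A D → extV A n X (B × D)
  | 0 => by
    intro X B D _ _ _ _ _ _ hB hD
    obtain ⟨I_B, e_B, E, ρ, hI_B, he_B, hE, hρmk⟩ :=
      exists_nice_prod_embed (A := A) B D
    have hIprod : Module.Injective A (↥I_B × D) := injective_prod hI_B hD
    rw [extV_iff]
    intro I _ _ hI e he
    refine extV_indep 0 hIprod hI E hE e he ?_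
    rw [extVAt_zero_iff]
    intro φ
    obtain ⟨ψ₁, hψ₁⟩ := hB I_B hI_B e_B he_B (ρ.toLinearMap ∘ₗ φ)
    refine ⟨ψ₁.prod 0, ?_⟩
    ext x
    apply ρ.injective
    have h1 := LinearMap.congr_fun hψ₁ x
    simp only [LinearMap.comp_apply, LinearEquiv.coe_coe] at h1 ⊢
    rw [show ((ψ₁.prod 0) x : ↥I_B × D) = (ψ₁ x, 0) from rfl, hρmk]
    exact h1
  | n+1 => by
    intro X B D _ _ _ _ _ _ hB hD
    obtain ⟨I_B, e_B, E, ρ, hI_B, he_B, hE, hρmk⟩ :=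
      exists_nice_prod_embed (A := A) B D
    have hIprod : Module.Injective A (↥I_B × D) := injective_prod hI_B hD
    intro I _ _ hI e he
    have hBat : extV A n X (↥I_B ⧸ LinearMap.range e_B) := hB I_B hI_B e_B he_B
    have hnice : extV A n X ((↥I_B × D) ⧸ LinearMap.range E) :=
      extV_congr n (LinearEquiv.refl A X) ρ.symm hBat
    exact extV_indep (n+1) hIprod hI E hE e he hnice
  termination_by n => 2 * n + 1

/-- `Ext^{n+1}(X, B × D) = 0` implies `Ext^{n+1}(X, B) = 0`. -/
theorem extV_factor : ∀ (n : ℕ) ⦃X B D : Type u⦄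
    [AddCommGroup X] [Module A X] [AddCommGroup B] [Module A B]
    [AddCommGroup D] [Module A D],
    extV A n X (B × D) → extV A n X B
  | 0 => by
    intro X B D _ _ _ _ _ _ h I _ _ hI e_B he_B φ
    obtain ⟨I_D, e_D, hI_D, he_D⟩ := exists_embed_injective (A := A) D
    set E := e_B.prodMap e_D with hE_def
    have hE : Function.Injective E := by
      rw [hE_def, LinearMap.coe_prodMap]
      exact he_B.prodMap he_D
    have hIprod : Module.Injective A (I × I_D) := injective_prod hI hI_D
    have hjbarle : LinearMap.range e_B ≤
        (LinearMap.range E).comap (LinearMap.inl A I I_D) := by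
      rintro x ⟨b, rfl⟩
      exact ⟨(b, 0), by simp [hE_def]⟩
    set jbar := Submodule.mapQ (LinearMap.range e_B) (LinearMap.range E)
      (LinearMap.inl A I I_D) hjbarle with hjbardef
    obtain ⟨Ψ, hΨ⟩ := h (I × I_D) hIprod E hE (jbar ∘ₗ φ)
    refine ⟨LinearMap.fst A I I_D ∘ₗ Ψ, ?_⟩
    ext x
    have hΨx := LinearMap.congr_fun hΨ x
    simp only [LinearMap.comp_apply, LinearMap.fst_apply] at hΨx ⊢
    obtain ⟨i, hi⟩ := (LinearMap.range e_B).mkQ_surjective (φ x)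
    have hpbarle : LinearMap.range E ≤
        (LinearMap.range e_B).comap (LinearMap.fst A I I_D) := by
      rintro z ⟨⟨b, d⟩, rfl⟩
      exact ⟨b, rfl⟩
    set pbar := Submodule.mapQ (LinearMap.range E) (LinearMap.range e_B)
      (LinearMap.fst A I I_D) hpbarle with hpbardef
    have key : (LinearMap.range e_B).mkQ ((Ψ x).1) = pbar ((LinearMap.range E).mkQ (Ψ x)) := by
      simp [hpbardef, Submodule.mapQ_apply]
    rw [key, hΨx, ← hi]
    simp [hjbardef, hpbardef, Submodule.mapQ_apply]
  | n+1 => by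
    intro X B D _ _ _ _ _ _ h I _ _ hI e_B he_B
    obtain ⟨I_D, e_D, hI_D, he_D⟩ := exists_embed_injective (A := A) D
    set E := e_B.prodMap e_D with hE_def
    have hE : Function.Injective E := by
      rw [hE_def, LinearMap.coe_prodMap]
      exact he_B.prodMap he_D
    have hIprod : Module.Injective A (I × I_D) := injective_prod hI hI_D
    have h' : extV A n X ((I × I_D) ⧸ LinearMap.range E) := h (I × I_D) hIprod E hE
    have hrange : LinearMap.range E = (LinearMap.range e_B).prod (LinearMap.range e_D) := by
      apply le_antisymm
      · rintro z ⟨⟨b, d⟩, rfl⟩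
        exact ⟨⟨b, rfl⟩, ⟨d, rfl⟩⟩
      · rintro ⟨z₁, z₂⟩ ⟨⟨b, hb⟩, ⟨d, hd⟩⟩
        exact ⟨(b, d), by simp [hE_def, hb, hd]⟩
    have iso : ((I × I_D) ⧸ LinearMap.range E) ≃ₗ[A]
        ((I ⧸ LinearMap.range e_B) × (I_D ⧸ LinearMap.range e_D)) :=
      (Submodule.quotEquivOfEq _ _ hrange).trans (quotProdEquiv _ _)
    have h'' : extV A n X ((I ⧸ LinearMap.range e_B) × (I_D ⧸ LinearMap.range e_D)) :=
      extV_congr n (LinearEquiv.refl A X) iso h'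
    exact extV_factor n h''
  termination_by n => 2 * n

end

theorem extV_of_extVAt (n : ℕ) {X M I₀ : Type u} [AddCommGroup X] [Module A X]
    [AddCommGroup M] [Module A M] [AddCommGroup I₀] [Module A I₀]
    (hI₀ : Module.Injective A I₀) (f : M →ₗ[A] I₀) (hf : Function.Injective f)
    (h : extVAt A n X I₀ (LinearMap.range f)) : extV A n X M := by
  rw [extV_iff]
  intro I _ _ hI e he
  exact extV_indep n hI₀ hI f hf e he h

theorem extV_of_injDimLE : ∀ (m : ℕ) (M : Type u) [AddCommGroup M] [Module A M],
    injDimLE A m M → ∀ (n : ℕ) (X : Type u) [AddCommGroup X] [Module A X],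
    m ≤ n → extV A n X M
  | 0 => by
    intro M _ _ h n X _ _ _
    exact extV_of_injective n X M h
  | m+1 => by
    intro M _ _ h n X _ _ hmn
    obtain ⟨I, f, hI, hf, hC⟩ := h
    obtain ⟨n', rfl⟩ : ∃ n', n = n' + 1 := ⟨n - 1, by omega⟩
    have hC' : extV A n' X (↥I ⧸ LinearMap.range f) :=
      extV_of_injDimLE m _ hC n' X (by omega)
    exact extV_of_extVAt (n'+1) hI f hf hC'

theorem injective_of_extV_cyclic {M : Type u} [AddCommGroup M] [Module A M]
    (h : ∀ J : Ideal A, extV A 0 (A ⧸ J) M) : Module.Injective A M := by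
  obtain ⟨I, e, hI, he⟩ := exists_embed_injective (A := A) M
  apply Module.Baer.injective
  intro J g
  obtain ⟨G, hG⟩ := hI.out J.subtype (Submodule.injective_subtype J) (e ∘ₗ g)
  have hkill : J ≤ LinearMap.ker ((LinearMap.range e).mkQ ∘ₗ G) := by
    intro x hx
    have hGx : G x = e (g ⟨x, hx⟩) := hG ⟨x, hx⟩
    simp only [LinearMap.mem_ker, LinearMap.comp_apply, hGx, Submodule.mkQ_apply]
    exact (Submodule.Quotient.mk_eq_zero _).2 (LinearMap.mem_range_self e _)
  set χ := J.liftQ ((LinearMap.range e).mkQ ∘ₗ G) hkill with hχ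
  obtain ⟨Ψ, hΨ⟩ := h J I hI e he χ
  set Θ := G - Ψ ∘ₗ J.mkQ with hΘdef
  have hΘ : ∀ x, Θ x ∈ LinearMap.range e := by
    intro x
    have h1 : (LinearMap.range e).mkQ (Ψ (J.mkQ x)) = χ (J.mkQ x) := LinearMap.congr_fun hΨ _
    have h2 : χ (J.mkQ x) = (LinearMap.range e).mkQ (G x) := by simp [hχ]
    have h3 : (LinearMap.range e).mkQ (Θ x) = 0 := by
      rw [hΘdef]
      simp only [LinearMap.sub_apply, LinearMap.comp_apply, map_sub, h1, h2, sub_self]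
    rwa [Submodule.mkQ_apply, Submodule.Quotient.mk_eq_zero] at h3
  set eqv := LinearEquiv.ofInjective e he with heqv
  set g' := eqv.symm.toLinearMap ∘ₗ (Θ.codRestrict (LinearMap.range e) hΘ) with hg'def
  have hg'e : ∀ x, e (g' x) = Θ x := by
    intro x
    have hcoe : ∀ y, (eqv y : I) = e y := fun y => rfl
    simp only [hg'def, LinearMap.comp_apply, LinearEquiv.coe_coe]
    rw [← hcoe, eqv.apply_symm_apply]
    rfl
  refine ⟨g', ?_⟩
  intro x hx
  apply he
  rw [hg'e]
  have hGx : G x = e (g ⟨x, hx⟩) := hG ⟨x, hx⟩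
  have hmk : J.mkQ x = 0 := by
    rw [Submodule.mkQ_apply, Submodule.Quotient.mk_eq_zero]
    exact hx
  simp only [hΘdef, LinearMap.sub_apply, LinearMap.comp_apply, hGx, hmk, map_zero, sub_zero]

theorem exists_linear_embedding_of_dualEval {S : Type u} [AddCommGroup S] [Module A S]
    (hS : IsSimpleModule A S) (h : Function.Injective (dualEval A S)) :
    ∃ ι : S →ₗ[A] A, Function.Injective ι := by
  haveI := hS
  haveI : Nontrivial S := IsSimpleModule.nontrivial A S
  obtain ⟨s, hs⟩ := exists_ne (0 : S)
  have hds : dualEval A S s ≠ 0 := fun h0 => hs (h (by rw [h0, map_zero]))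
  have hex : ∃ f : S →ₗ[A] A, f s ≠ 0 := by
    by_contra hc
    push_neg at hc
    apply hds
    ext f
    exact hc f
  obtain ⟨f, hf⟩ := hex
  refine ⟨f, ?_⟩
  rw [← LinearMap.ker_eq_bot]
  rcases eq_bot_or_eq_top (LinearMap.ker f) with hbot | htop
  · exact hbot
  · exfalso
    apply hf
    have : s ∈ LinearMap.ker f := by rw [htop]; exact Submodule.mem_top
    exact this

theorem extV_quot_of_simples {M : Type u} [AddCommGroup M] [Module A M]
    (hNoeth : IsNoetherian A A) (hArt : IsArtinian A A) (n : ℕ)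
    (hsimple : ∀ (S : Type u) [AddCommGroup S] [Module A S],
      IsSimpleModule A S → extV A n S M) :
    ∀ N : Submodule A A, extV A n (A ⧸ N) M := by
  haveI := hNoeth
  haveI := hArt
  intro N
  refine IsNoetherian.induction (P := fun N => extV A n (A ⧸ N) M) ?_ N
  intro N IH
  by_cases hN : N = ⊤
  · subst hN
    haveI : Subsingleton ((A : Type u) ⧸ (⊤ : Submodule A A)) :=
      Submodule.Quotient.subsingleton_iff.mpr rfl
    exact extV_of_subsingleton_left n _ M
  · haveI := (Submodule.Quotient.nontrivial_iff (p := N)).mpr hN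
    haveI : IsAtomic (Submodule A (A ⧸ N)) :=
      isAtomic_of_orderBot_wellFounded_lt (wellFounded_lt (α := Submodule A (A ⧸ N)))
    obtain ⟨S_sub, hatom⟩ := IsAtomic.exists_atom (α := Submodule A (A ⧸ N))
    haveI hsimp : IsSimpleModule A ↥S_sub := isSimpleModule_iff_isAtom.mpr hatom
    set N' : Submodule A A := S_sub.comap N.mkQ with hN'def
    have hle : N ≤ N' := by
      intro x hx
      show N.mkQ x ∈ S_sub
      rw [show N.mkQ x = 0 by
        rw [Submodule.mkQ_apply, Submodule.Quotient.mk_eq_zero]; exact hx]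
      exact S_sub.zero_mem
    have hmap : S_sub = N'.map N.mkQ := by
      rw [hN'def, Submodule.map_comap_eq, Submodule.range_mkQ, top_inf_eq]
    have hlt : N < N' := by
      refine lt_of_le_of_ne hle ?_
      intro hEq
      refine hatom.1 ?_
      rw [hmap, ← hEq]
      rw [eq_bot_iff]
      rintro y ⟨x, hx, rfl⟩
      show N.mkQ x ∈ (⊥ : Submodule A (A ⧸ N))
      rw [Submodule.mkQ_apply, Submodule.mem_bot, Submodule.Quotient.mk_eq_zero]
      exact hx
    have iso : ((A ⧸ N) ⧸ (LinearMap.range S_sub.subtype)) ≃ₗ[A] ((A : Type u) ⧸ N') :=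
      (Submodule.quotEquivOfEq _ _ (by rw [Submodule.range_subtype, hmap])).trans
        (Submodule.quotientQuotientEquivQuotient N N' hle)
    have hQ : extV A n ((A ⧸ N) ⧸ LinearMap.range S_sub.subtype) M :=
      extV_congr n iso.symm (LinearEquiv.refl A M) (IH N' hlt)
    exact extV_of_ses n S_sub.subtype (Submodule.injective_subtype S_sub)
      (hsimple ↥S_sub hsimp) hQ

theorem injDimLE_downgrade : ∀ (n : ℕ) (M : Type u) [AddCommGroup M] [Module A M],
    injDimLE A (n+1) M → (∀ J : Ideal A, extV A n (A ⧸ J) M) → injDimLE A n M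
  | 0 => fun M _ _ _ hJ => injective_of_extV_cyclic hJ
  | m+1 => fun M _ _ h hJ => by
    obtain ⟨I, f, hI, hf, hC⟩ := h
    exact ⟨I, f, hI, hf, injDimLE_downgrade m _ hC (fun J => hJ J ↥I hI f hf)⟩

theorem main_aux (hNoeth : IsNoetherian A A) (hArt : IsArtinian A A)
    (htor : ∀ (S : Type u) [AddCommGroup S] [Module A S],
      IsSimpleModule A S → Function.Injective (dualEval A S)) :
    ∀ n : ℕ, injDimLE A n A → Module.Injective A A
  | 0 => fun h => h
  | n+1 => fun h => by
    have hsimple : ∀ (S : Type u) [AddCommGroup S] [Module A S],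
        IsSimpleModule A S → extV A n S A := by
      intro S _ _ hS
      obtain ⟨ι, hι⟩ := exists_linear_embedding_of_dualEval hS (htor S hS)
      exact extV_of_sub n ι hι (extV_self_left n A)
        (extV_of_injDimLE (n+1) A h (n+1) _ le_rfl)
    have hJ : ∀ J : Ideal A, extV A n (A ⧸ J) A :=
      fun J => extV_quot_of_simples hNoeth hArt n hsimple J
    exact main_aux hNoeth hArt htor n (injDimLE_downgrade n A h hJ)


/-- Let `A` be a finite-dimensional algebra over a field `k` which is Gorenstein, i.e.,
`A` has finite injective dimension as a left module over itself and finite injective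
dimension as a right module over itself. If every simple left `A`-module is torsionless,
then `A` is self-injective. -/
theorem selfinjective_of_gorenstein_of_simples_torsionless
    (k A : Type u) [Field k] [Ring A] [Algebra k A] [FiniteDimensional k A]
    (hleft : ∃ n, injDimLE A n A)
    (hright : ∃ n, injDimLE Aᵐᵒᵖ n Aᵐᵒᵖ)
    (htorsionless : ∀ (S : Type u) [AddCommGroup S] [Module A S],
      IsSimpleModule A S → Function.Injective (dualEval A S)) :
    Module.Injective A A := by
  obtain ⟨n, hn⟩ := hleft
  exact main_aux (isNoetherian_of_tower k inferInstance)
    (isArtinian_of_tower k inferInstance) htorsionless n hn
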